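/- A twisted-circulant matrix A(a), for a = (a_0, …, a_{n−1}) ∈ W^n, is invertible in the n×n matrix ring over W if and only if a_0 is a unit of W; moreover, when a_0 ∈ W^×, the inverse matrix is again of twisted-circulant form, i.e. A(a)^{-1} = A(b) for some b ∈ W^n. -/

import Mathlib

/-- The Frobenius automorphism `σ` of `W = W(K)`, induced by functoriality of Witt vectors
from the Frobenius automorphism `x ↦ x^p` of the finite field `K`. -/
noncomputable def wittFrob (p : ℕ) [Fact p.Prime]
    (K : Type) [Field K] [Fintype K] [CharP K p] : RingAut (WittVector p K) :=
  RingEquiv.ofRingHom (WittVector.map ((frobeniusEquiv K p : K ≃+* K) : K →+* K))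
    (WittVector.map (((frobeniusEquiv K p).symm : K ≃+* K) : K →+* K))
    (by
      apply RingHom.ext
      intro x
      apply WittVector.ext
      intro k
      simp [WittVector.map_coeff])
    (by
      apply RingHom.ext
      intro x
      apply WittVector.ext
      intro k
      simp [WittVector.map_coeff])

/-- The "twisted-circulant" matrix `A(a)` of a tuple `a = (a_0, …, a_{n−1}) ∈ Wⁿ`:
`A(a)_{ij} = σ^{−i}(a_{i−j})` for `i ≥ j` and `A(a)_{ij} = p·σ^{−i}(a_{n+i−j})` for `i < j`
(the index `i − j` resp. `n + i − j` is subtraction modulo `n`, i.e. subtraction in `Fin n`). -/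
noncomputable def twc (p : ℕ) [Fact p.Prime]
    (K : Type) [Field K] [Fintype K] [CharP K p] (n : ℕ)
    (a : Fin n → WittVector p K) : Matrix (Fin n) (Fin n) (WittVector p K) :=
  Matrix.of fun i j =>
    if (j : ℕ) ≤ (i : ℕ) then ((wittFrob p K)⁻¹ ^ (i : ℕ)) (a (i - j))
    else (p : WittVector p K) * (((wittFrob p K)⁻¹ ^ (i : ℕ)) (a (i - j)))

section TwcAux

lemma aut_inv_cancel {R : Type*} [CommRing R] (u : RingAut R) (x : R) : u⁻¹ (u x) = x := by
  have h : (u⁻¹ * u) x = (1 : RingAut R) x := by rw [inv_mul_cancel]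
  exact h

lemma fin_sub_val {n : ℕ} (i j : Fin n) :
    ((i - j : Fin n) : ℕ)
      = if (j : ℕ) ≤ (i : ℕ) then (i : ℕ) - (j : ℕ) else n + (i : ℕ) - (j : ℕ) := by
  have hi := i.isLt
  have hj := j.isLt
  rw [Fin.sub_def]
  split
  · next h =>
      have h2 : n - (j : ℕ) + (i : ℕ) = n + ((i : ℕ) - (j : ℕ)) := by omega
      show (n - (j : ℕ) + (i : ℕ)) % n = _
      rw [h2, Nat.add_mod_left, Nat.mod_eq_of_lt (by omega)]
  · next h =>
      show (n - (j : ℕ) + (i : ℕ)) % n = _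
      rw [Nat.mod_eq_of_lt (by omega)]
      omega

lemma finmk_val {n m : ℕ} (h : m < n) : ((⟨m, h⟩ : Fin n) : ℕ) = m := rfl

variable (p : ℕ) [Fact p.Prime] (K : Type) [Field K] [Fintype K] [CharP K p]

local notation "W" => WittVector p K

lemma wittFrob_coeff (x : W) (k : ℕ) :
    (wittFrob p K x).coeff k = (x.coeff k) ^ p := by
  show (WittVector.map ((frobeniusEquiv K p : K ≃+* K) : K →+* K) x).coeff k = _
  rw [WittVector.map_coeff]
  exact frobenius_def _ _

lemma wittFrob_pow_coeff (m : ℕ) (x : W) (k : ℕ) :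
    ((wittFrob p K ^ m) x).coeff k = (x.coeff k) ^ (p ^ m) := by
  induction m with
  | zero => rw [pow_zero, pow_zero, pow_one]; rfl
  | succ m ih =>
      rw [pow_succ', pow_succ]
      show (wittFrob p K ((wittFrob p K ^ m) x)).coeff k = _
      rw [wittFrob_coeff, ih, ← pow_mul]

lemma wittFrob_pow_card {n : ℕ} (hK : Fintype.card K = p ^ n) :
    wittFrob p K ^ n = 1 := by
  apply RingEquiv.ext
  intro x
  apply WittVector.ext
  intro k
  rw [wittFrob_pow_coeff, ← hK, FiniteField.pow_card]
  rfl

lemma wittFrobInv_pow_card {n : ℕ} (hK : Fintype.card K = p ^ n) :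
    (wittFrob p K)⁻¹ ^ n = 1 := by
  rw [inv_pow, wittFrob_pow_card p K hK, inv_one]

lemma tau_pow (m : ℕ) (x : W) :
    (wittFrob p K)⁻¹ (((wittFrob p K)⁻¹ ^ m) x) = ((wittFrob p K)⁻¹ ^ (m + 1)) x := by
  rw [pow_succ']
  rfl

lemma twc_apply {n : ℕ} (a : Fin n → W) (i j : Fin n) :
    twc p K n a i j
      = (if (j : ℕ) ≤ (i : ℕ) then 1 else (p : W))
          * ((wittFrob p K)⁻¹ ^ (i : ℕ)) (a (i - j)) := by
  simp only [twc, Matrix.of_apply]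
  split
  · rw [one_mul]
  · rfl

/-- The twisted shift matrix `Π`. -/
noncomputable def twcP (n : ℕ) : Matrix (Fin n) (Fin n) W :=
  Matrix.of fun i j =>
    if (j : ℕ) + 1 = (i : ℕ) then 1
    else if (i : ℕ) = 0 ∧ (j : ℕ) + 1 = n then (p : W) else 0

lemma twcP_apply {n : ℕ} (i j : Fin n) :
    twcP p K n i j
      = if (j : ℕ) + 1 = (i : ℕ) then 1
        else if (i : ℕ) = 0 ∧ (j : ℕ) + 1 = n then (p : W) else 0 := rfl

lemma mul_twcP_apply {n : ℕ} (M : Matrix (Fin n) (Fin n) W) (i j : Fin n)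
    (h : (j : ℕ) + 1 < n) :
    (M * twcP p K n) i j = M i ⟨(j : ℕ) + 1, h⟩ := by
  rw [Matrix.mul_apply, Finset.sum_eq_single (⟨(j : ℕ) + 1, h⟩ : Fin n)]
  · rw [twcP_apply, if_pos rfl, mul_one]
  · intro k _ hk
    rw [twcP_apply, if_neg (fun hh => hk (Fin.ext hh.symm)),
      if_neg (by rintro ⟨_, h2⟩; omega), mul_zero]
  · intro hmem; exact absurd (Finset.mem_univ _) hmem

lemma mul_twcP_apply_last {n : ℕ} (hn : 1 ≤ n) (M : Matrix (Fin n) (Fin n) W) (i j : Fin n)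
    (h : (j : ℕ) + 1 = n) :
    (M * twcP p K n) i j = (p : W) * M i ⟨0, hn⟩ := by
  rw [Matrix.mul_apply, Finset.sum_eq_single (⟨0, hn⟩ : Fin n)]
  · rw [twcP_apply, if_neg (by omega), if_pos ⟨rfl, h⟩, mul_comm]
  · intro k _ hk
    have hk0 : (k : ℕ) ≠ 0 := fun hh => hk (Fin.ext hh)
    have hkl := k.isLt
    rw [twcP_apply, if_neg (by omega), if_neg (by rintro ⟨h1, _⟩; exact hk0 h1), mul_zero]
  · intro hmem; exact absurd (Finset.mem_univ _) hmem

lemma twcP_mul_apply {n : ℕ} (M : Matrix (Fin n) (Fin n) W) (i j : Fin n)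
    (h : 1 ≤ (i : ℕ)) :
    (twcP p K n * M) i j
      = M ⟨(i : ℕ) - 1, lt_of_le_of_lt (Nat.sub_le _ _) i.isLt⟩ j := by
  rw [Matrix.mul_apply, Finset.sum_eq_single
      (⟨(i : ℕ) - 1, lt_of_le_of_lt (Nat.sub_le _ _) i.isLt⟩ : Fin n)]
  · rw [twcP_apply, if_pos (show (i : ℕ) - 1 + 1 = (i : ℕ) by omega), one_mul]
  · intro k _ hk
    have hkk : (k : ℕ) ≠ (i : ℕ) - 1 := fun hh => hk (Fin.ext hh)
    rw [twcP_apply, if_neg (by omega), if_neg (by rintro ⟨h1, _⟩; omega), zero_mul]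
  · intro hmem; exact absurd (Finset.mem_univ _) hmem

lemma twcP_mul_apply_zero {n : ℕ} (hn : 1 ≤ n) (M : Matrix (Fin n) (Fin n) W) (i j : Fin n)
    (h : (i : ℕ) = 0) :
    (twcP p K n * M) i j = (p : W) * M ⟨n - 1, by omega⟩ j := by
  rw [Matrix.mul_apply, Finset.sum_eq_single (⟨n - 1, by omega⟩ : Fin n)]
  · rw [twcP_apply, if_neg (show ¬ (n - 1 + 1 = (i : ℕ)) by omega),
      if_pos ⟨h, show n - 1 + 1 = n by omega⟩]
  · intro k _ hk
    have hkk : (k : ℕ) ≠ n - 1 := fun hh => hk (Fin.ext hh)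
    have hkl := k.isLt
    rw [twcP_apply, if_neg (by omega), if_neg (by rintro ⟨_, h2⟩; omega), zero_mul]
  · intro hmem; exact absurd (Finset.mem_univ _) hmem

variable {n : ℕ}

lemma twc_rel_11 (a : Fin n → W) (i j : Fin n) (h1 : (j : ℕ) + 1 < n)
    (h2 : 1 ≤ (i : ℕ)) :
    twc p K n a i ⟨(j : ℕ) + 1, h1⟩
      = (wittFrob p K)⁻¹
          (twc p K n a ⟨(i : ℕ) - 1, lt_of_le_of_lt (Nat.sub_le _ _) i.isLt⟩ j) := by
  have hi := i.isLt
  have hidx : (⟨(i : ℕ) - 1, lt_of_le_of_lt (Nat.sub_le _ _) i.isLt⟩ : Fin n) - j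
      = i - ⟨(j : ℕ) + 1, h1⟩ := by
    apply Fin.ext
    rw [fin_sub_val, fin_sub_val]
    simp only [finmk_val]
    split_ifs <;> omega
  have hpow : (i : ℕ) - 1 + 1 = (i : ℕ) := by omega
  rw [twc_apply, twc_apply, map_mul, tau_pow, apply_ite ⇑(wittFrob p K)⁻¹, map_one,
    map_natCast, hidx, hpow]
  simp only [finmk_val]
  split_ifs <;> first | rfl | omega

lemma twc_rel_12 (hn : 1 ≤ n) (hK : Fintype.card K = p ^ n) (a : Fin n → W) (i j : Fin n)
    (h1 : (j : ℕ) + 1 < n) (h2 : (i : ℕ) = 0) :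
    twc p K n a i ⟨(j : ℕ) + 1, h1⟩
      = (p : W) * (wittFrob p K)⁻¹ (twc p K n a ⟨n - 1, by omega⟩ j) := by
  have hj := j.isLt
  have hidx : (⟨n - 1, by omega⟩ : Fin n) - j = i - ⟨(j : ℕ) + 1, h1⟩ := by
    apply Fin.ext
    rw [fin_sub_val, fin_sub_val]
    simp only [finmk_val]
    split_ifs <;> omega
  have hpow : n - 1 + 1 = n := by omega
  rw [twc_apply, twc_apply, map_mul, tau_pow, apply_ite ⇑(wittFrob p K)⁻¹, map_one,
    map_natCast, hidx, hpow, wittFrobInv_pow_card p K hK, h2, pow_zero]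
  simp only [finmk_val]
  rw [if_neg (by omega), if_pos (by omega), one_mul]

lemma twc_rel_21 (hn : 1 ≤ n) (a : Fin n → W) (i j : Fin n) (h1 : (j : ℕ) + 1 = n)
    (h2 : 1 ≤ (i : ℕ)) :
    (p : W) * twc p K n a i ⟨0, hn⟩
      = (wittFrob p K)⁻¹
          (twc p K n a ⟨(i : ℕ) - 1, lt_of_le_of_lt (Nat.sub_le _ _) i.isLt⟩ j) := by
  have hi := i.isLt
  have hidx : (⟨(i : ℕ) - 1, lt_of_le_of_lt (Nat.sub_le _ _) i.isLt⟩ : Fin n) - j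
      = i - ⟨0, hn⟩ := by
    apply Fin.ext
    rw [fin_sub_val, fin_sub_val]
    simp only [finmk_val]
    split_ifs <;> omega
  have hpow : (i : ℕ) - 1 + 1 = (i : ℕ) := by omega
  rw [twc_apply, twc_apply, map_mul, tau_pow, apply_ite ⇑(wittFrob p K)⁻¹, map_one,
    map_natCast, hidx, hpow]
  simp only [finmk_val]
  rw [if_pos (by omega), if_neg (by omega), one_mul]

lemma twc_rel_22 (hn : 1 ≤ n) (hK : Fintype.card K = p ^ n) (a : Fin n → W) (i j : Fin n)
    (h1 : (j : ℕ) + 1 = n) (h2 : (i : ℕ) = 0) :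
    (p : W) * twc p K n a i ⟨0, hn⟩
      = (p : W) * (wittFrob p K)⁻¹ (twc p K n a ⟨n - 1, by omega⟩ j) := by
  have hj := j.isLt
  have hidx : (⟨n - 1, by omega⟩ : Fin n) - j = i - ⟨0, hn⟩ := by
    apply Fin.ext
    rw [fin_sub_val, fin_sub_val]
    simp only [finmk_val]
    split_ifs <;> omega
  have hpow : n - 1 + 1 = n := by omega
  rw [twc_apply, twc_apply, map_mul, tau_pow, apply_ite ⇑(wittFrob p K)⁻¹, map_one,
    map_natCast, hidx, hpow, wittFrobInv_pow_card p K hK, h2, pow_zero]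
  simp only [finmk_val]
  rw [if_pos (by omega), if_pos (by omega)]

lemma twc_mul_twcP (hn : 1 ≤ n) (hK : Fintype.card K = p ^ n) (a : Fin n → W) :
    twc p K n a * twcP p K n = twcP p K n * (twc p K n a).map ⇑(wittFrob p K)⁻¹ := by
  apply Matrix.ext
  intro i j
  by_cases h1 : (j : ℕ) + 1 < n
  · rw [mul_twcP_apply p K _ i j h1]
    by_cases h2 : 1 ≤ (i : ℕ)
    · rw [twcP_mul_apply p K _ i j h2, Matrix.map_apply, ← twc_rel_11 p K a i j h1 h2]
    · rw [twcP_mul_apply_zero p K hn _ i j (by omega), Matrix.map_apply,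
        ← twc_rel_12 p K hn hK a i j h1 (by omega)]
  · have h1' : (j : ℕ) + 1 = n := by have := j.isLt; omega
    rw [mul_twcP_apply_last p K hn _ i j h1']
    by_cases h2 : 1 ≤ (i : ℕ)
    · rw [twcP_mul_apply p K _ i j h2, Matrix.map_apply,
        ← twc_rel_21 p K hn a i j h1' h2]
    · rw [twcP_mul_apply_zero p K hn _ i j (by omega), Matrix.map_apply,
        ← twc_rel_22 p K hn hK a i j h1' (by omega)]

lemma eq_twc_of_rel (hn : 1 ≤ n) (hK : Fintype.card K = p ^ n)
    (M : Matrix (Fin n) (Fin n) W)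
    (h : M * twcP p K n = twcP p K n * M.map ⇑(wittFrob p K)⁻¹) :
    M = twc p K n (fun k => (wittFrob p K ^ (k : ℕ)) (M k ⟨0, hn⟩)) := by
  set b : Fin n → W := fun k => (wittFrob p K ^ (k : ℕ)) (M k ⟨0, hn⟩) with hb
  have key : ∀ m : ℕ, ∀ j i : Fin n, (j : ℕ) = m → M i j = twc p K n b i j := by
    intro m
    induction m with
    | zero =>
        intro j i hj
        have hj0 : j = ⟨0, hn⟩ := Fin.ext hj
        have hidx : i - j = i := by
          apply Fin.ext
          rw [fin_sub_val, if_pos (by omega)]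
          omega
        rw [twc_apply]
        rw [if_pos (show (j : ℕ) ≤ (i : ℕ) by omega), one_mul, hidx, hb]
        show M i j = ((wittFrob p K)⁻¹ ^ (i : ℕ)) ((wittFrob p K ^ (i : ℕ)) (M i ⟨0, hn⟩))
        rw [inv_pow, aut_inv_cancel, hj0]
    | succ m ih =>
        intro j i hj
        have hm : m + 1 < n := hj ▸ j.isLt
        have hj' : j = ⟨m + 1, hm⟩ := Fin.ext hj
        have e := congrFun (congrFun h i) (⟨m, by omega⟩ : Fin n)
        rw [show (M * twcP p K n) i ⟨m, by omega⟩
            = M i ⟨m + 1, hm⟩ from mul_twcP_apply p K M i ⟨m, by omega⟩ hm] at e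
        by_cases h2 : 1 ≤ (i : ℕ)
        · rw [twcP_mul_apply p K _ i _ h2, Matrix.map_apply,
            ih ⟨m, by omega⟩ ⟨(i : ℕ) - 1, lt_of_le_of_lt (Nat.sub_le _ _) i.isLt⟩ rfl] at e
          rw [hj', e, ← twc_rel_11 p K b i ⟨m, by omega⟩ hm h2]
        · rw [twcP_mul_apply_zero p K hn _ i _ (by omega), Matrix.map_apply,
            ih ⟨m, by omega⟩ ⟨n - 1, by omega⟩ rfl] at e
          rw [hj', e, ← twc_rel_12 p K hn hK b i ⟨m, by omega⟩ hm (by omega)]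
  apply Matrix.ext
  intro i j
  exact key (j : ℕ) j i rfl

lemma twc_map_det (hn : 1 ≤ n) (a : Fin n → W) :
    ((twc p K n a).map ⇑(WittVector.constantCoeff : W →+* K)).det
      = ∏ i : Fin n,
          WittVector.constantCoeff (((wittFrob p K)⁻¹ ^ (i : ℕ)) (a ⟨0, hn⟩)) := by
  rw [Matrix.det_of_lowerTriangular _ ?ht]
  case ht =>
    intro i j hij
    have hij' : (i : ℕ) < (j : ℕ) := hij
    rw [Matrix.map_apply, twc_apply, if_neg (by omega), map_mul, map_natCast,
      CharP.cast_eq_zero K p, zero_mul]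
  apply Finset.prod_congr rfl
  intro i _
  have hii : i - i = (⟨0, hn⟩ : Fin n) := by
    apply Fin.ext
    rw [fin_sub_val, if_pos le_rfl]
    simp only [finmk_val]
    omega
  rw [Matrix.map_apply, twc_apply, if_pos le_rfl, one_mul, hii]

end TwcAux

/-- A twisted-circulant matrix `A(a)` is invertible in the `n×n` matrix ring
over `W` if and only if `a₀` is a unit of `W`; moreover, when `a₀ ∈ W^×`, the inverse matrix
is again of twisted-circulant form: `A(a)⁻¹ = A(b)` for some `b ∈ Wⁿ`. -/
theorem twc_isUnit_iff_and_inverse_twc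
    (p n : ℕ) [Fact p.Prime] (hn : 1 ≤ n)
    (K : Type) [Field K] [Fintype K] [CharP K p] (hK : Fintype.card K = p ^ n)
    (a : Fin n → WittVector p K) :
    (IsUnit (twc p K n a) ↔ IsUnit (a ⟨0, hn⟩)) ∧
    (IsUnit (a ⟨0, hn⟩) → ∃ b : Fin n → WittVector p K,
      twc p K n a * twc p K n b = 1 ∧ twc p K n b * twc p K n a = 1) := by
  have hiff : IsUnit (twc p K n a) ↔ IsUnit (a ⟨0, hn⟩) := by
    rw [Matrix.isUnit_iff_isUnit_det]
    constructor
    · intro hd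
      have h2 : IsUnit ((WittVector.constantCoeff : WittVector p K →+* K)
          (twc p K n a).det) := hd.map _
      rw [RingHom.map_det, RingHom.mapMatrix_apply, twc_map_det p K hn a] at h2
      have h3 := h2.ne_zero
      rw [Finset.prod_ne_zero_iff] at h3
      have h4 := h3 ⟨0, hn⟩ (Finset.mem_univ _)
      apply WittVector.isUnit_of_coeff_zero_ne_zero
      have h5 : (((wittFrob p K)⁻¹ ^ ((⟨0, hn⟩ : Fin n) : ℕ)) (a ⟨0, hn⟩)) = a ⟨0, hn⟩ := by
        show (((wittFrob p K)⁻¹ ^ (0 : ℕ)) (a ⟨0, hn⟩)) = a ⟨0, hn⟩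
        rw [pow_zero]
        rfl
      rw [h5] at h4
      exact h4
    · intro ha
      apply WittVector.isUnit_of_coeff_zero_ne_zero
      have hcc : (twc p K n a).det.coeff 0
          = (WittVector.constantCoeff : WittVector p K →+* K) ((twc p K n a).det) := rfl
      rw [hcc, RingHom.map_det, RingHom.mapMatrix_apply, twc_map_det p K hn a]
      rw [Finset.prod_ne_zero_iff]
      intro i _
      have hu : IsUnit (((wittFrob p K)⁻¹ ^ (i : ℕ)) (a ⟨0, hn⟩)) := ha.map _
      exact (hu.map (WittVector.constantCoeff : WittVector p K →+* K)).ne_zero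
  refine ⟨hiff, fun ha => ?_⟩
  obtain ⟨u, hu⟩ := hiff.mpr ha
  set Bm : Matrix (Fin n) (Fin n) (WittVector p K) := ↑u⁻¹ with hBm
  have h1 : twc p K n a * Bm = 1 := by rw [hBm, ← hu]; exact u.mul_inv
  have h2 : Bm * twc p K n a = 1 := by rw [hBm, ← hu]; exact u.inv_mul
  have hmul : ∀ X Y : Matrix (Fin n) (Fin n) (WittVector p K),
      (X * Y).map ⇑(wittFrob p K)⁻¹
        = X.map ⇑(wittFrob p K)⁻¹ * Y.map ⇑(wittFrob p K)⁻¹ := by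
    intro X Y
    have := Matrix.map_mul (L := X) (M := Y)
      (f := ((wittFrob p K)⁻¹ : RingAut (WittVector p K)).toRingHom)
    simpa using this
  have hone : (1 : Matrix (Fin n) (Fin n) (WittVector p K)).map ⇑(wittFrob p K)⁻¹ = 1 :=
    Matrix.map_one _ (map_zero _) (map_one _)
  have hAB : (twc p K n a).map ⇑(wittFrob p K)⁻¹ * Bm.map ⇑(wittFrob p K)⁻¹ = 1 := by
    rw [← hmul, h1, hone]
  have hrel : Bm * twcP p K n = twcP p K n * Bm.map ⇑(wittFrob p K)⁻¹ := by
    calc Bm * twcP p K n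
        = Bm * twcP p K n
            * ((twc p K n a).map ⇑(wittFrob p K)⁻¹ * Bm.map ⇑(wittFrob p K)⁻¹) := by
          rw [hAB, mul_one]
      _ = Bm * (twcP p K n * (twc p K n a).map ⇑(wittFrob p K)⁻¹)
            * Bm.map ⇑(wittFrob p K)⁻¹ := by
          rw [← mul_assoc, mul_assoc Bm (twcP p K n)]
      _ = Bm * (twc p K n a * twcP p K n) * Bm.map ⇑(wittFrob p K)⁻¹ := by
          rw [← twc_mul_twcP p K hn hK a]
      _ = (Bm * twc p K n a) * twcP p K n * Bm.map ⇑(wittFrob p K)⁻¹ := by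
          rw [mul_assoc Bm (twc p K n a)]
      _ = twcP p K n * Bm.map ⇑(wittFrob p K)⁻¹ := by rw [h2, one_mul]
  have hB := eq_twc_of_rel p K hn hK Bm hrel
  refine ⟨fun k => (wittFrob p K ^ (k : ℕ)) (Bm k ⟨0, hn⟩), ?_, ?_⟩
  · rw [← hB]; exact h1
  · rw [← hB]; exact h2
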